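/- Let ω = (ω_n)_n be any sequence with ω_n a density matrix on (ℂ^d)^⊗n. For γ ∈ ℝ set A_n(γ) := ω_n − 2^{−nγ}·1_n, and define the spectral sup-entropy rate S̄(ω) := inf{ γ ∈ ℝ : liminf_{n→∞} Tr[{A_n(γ) ≥ 0}·A_n(γ)] = 1 }. Then S̄(ω) = inf{ R ∈ ℝ : there exist orthogonal projections P_n on (ℂ^d)^⊗n such that Tr(P_n ω_n) → 1 as n → ∞ and limsup_{n→∞} (1/n) log(Tr P_n) ≤ R }. -/

import Mathlib

open scoped BigOperators ComplexOrder
open Matrix Filter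

noncomputable section

/-- Square matrices on `ℂ^d`. -/
abbrev Mat (d : ℕ) := Matrix (Fin d) (Fin d) ℂ

/-- Operators on the `n`-fold tensor power `(ℂ^d)^⊗n`, identified with matrices indexed by
`Fin n → Fin d`. -/
abbrev MatN (d n : ℕ) := Matrix (Fin n → Fin d) (Fin n → Fin d) ℂ

/-- A density matrix: positive semidefinite with unit trace. -/
def IsDensity {m : Type*} [Fintype m] [DecidableEq m] (ρ : Matrix m m ℂ) : Prop :=
  ρ.PosSemidef ∧ ρ.trace = 1

/-- The trace norm `‖X‖₁ = Tr √(XᴴX)`. -/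
noncomputable def traceNorm {m : Type*} [Fintype m] [DecidableEq m] (X : Matrix m m ℂ) : ℝ :=
  (((Matrix.posSemidef_conjTranspose_mul_self X).1.eigenvectorUnitary : Matrix m m ℂ) *
      Matrix.diagonal ((fun x : ℝ => ((√x : ℝ) : ℂ)) ∘
        (Matrix.posSemidef_conjTranspose_mul_self X).1.eigenvalues) *
      (star (Matrix.posSemidef_conjTranspose_mul_self X).1.eigenvectorUnitary : Matrix m m ℂ)).trace.re

/-- The `n`-fold tensor power `ρ^⊗n`. -/
def tpow {d : ℕ} (ρ : Mat d) (n : ℕ) : MatN d n := fun x y => ∏ i, ρ (x i) (y i)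

/-- The tensor power of `ρ` over the sites in `I ⊆ [n]`. -/
def tpowOn {d n : ℕ} (ρ : Mat d) (I : Finset (Fin n)) :
    Matrix ((i : I) → Fin d) ((i : I) → Fin d) ℂ := fun x y => ∏ i, ρ (x i) (y i)

/-- Combine a configuration on `I` with a configuration on its complement. -/
def combine {α : Type*} {n : ℕ} (I : Finset (Fin n)) (x : (i : I) → α)
    (c : (j : {j : Fin n // j ∉ I}) → α) : Fin n → α :=
  fun j => if h : j ∈ I then x ⟨j, h⟩ else c ⟨j, h⟩

/-- The marginal (partial trace over the sites outside `I`) of a state on `(ℂ^d)^⊗n`. -/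
noncomputable def marginal {d n : ℕ} (ρn : MatN d n) (I : Finset (Fin n)) :
    Matrix ((i : I) → Fin d) ((i : I) → Fin d) ℂ :=
  fun x y => ∑ c : (j : {j : Fin n // j ∉ I}) → Fin d, ρn (combine I x c) (combine I y c)

/-- A sequence of states `ρ_n` on `(ℂ^d)^⊗n` is weakly almost i.i.d. along `ρ` if for each
fixed `k ≥ 1` the average over all `k`-element subsets `I ⊆ [n]` of
`‖(ρ_n)_I − ρ^⊗k‖₁` tends to `0` as `n → ∞`. -/
def WeaklyAlmostIID {d : ℕ} (ρ : Mat d) (ρseq : ∀ n, MatN d n) : Prop :=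
  ∀ k : ℕ, 0 < k →
    Tendsto (fun n : ℕ =>
        (∑ I ∈ Finset.powersetCard k (Finset.univ : Finset (Fin n)),
          traceNorm (marginal (ρseq n) I - tpowOn ρ I)) / (n.choose k : ℝ))
      atTop (nhds 0)

/-- `A^(i) = 1 ⊗ ⋯ ⊗ A ⊗ ⋯ ⊗ 1` with `A` in the `i`-th tensor factor. -/
def embedAt {d : ℕ} (n : ℕ) (A : Mat d) (i : Fin n) : MatN d n :=
  fun x y => if ∀ j, j ≠ i → x j = y j then A (x i) (y i) else 0

/-- The empirical average `Ā_n = (1/n) Σ_i A^(i)`. -/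
noncomputable def avgObs {d : ℕ} (n : ℕ) (A : Mat d) : MatN d n :=
  (n : ℂ)⁻¹ • ∑ i : Fin n, embedAt n A i

open Classical in
/-- The spectral projection of a Hermitian matrix `Q` onto the span of eigenvectors whose
eigenvalue satisfies the predicate `S` (junk value `0` if `Q` is not Hermitian). -/
noncomputable def specProj {m : Type*} [Fintype m] [DecidableEq m]
    (S : ℝ → Prop) (Q : Matrix m m ℂ) : Matrix m m ℂ :=
  if hQ : Q.IsHermitian then
    (hQ.eigenvectorUnitary : Matrix m m ℂ) *
      Matrix.diagonal (fun i => if S (hQ.eigenvalues i) then (1 : ℂ) else 0) *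
      star (hQ.eigenvectorUnitary : Matrix m m ℂ)
  else 0

open Classical in
/-- Functional calculus for a Hermitian matrix (junk value `0` if not Hermitian). -/
noncomputable def mfun {m : Type*} [Fintype m] [DecidableEq m]
    (f : ℝ → ℝ) (Q : Matrix m m ℂ) : Matrix m m ℂ :=
  if hQ : Q.IsHermitian then
    (hQ.eigenvectorUnitary : Matrix m m ℂ) *
      Matrix.diagonal (fun i => (f (hQ.eigenvalues i) : ℂ)) *
      star (hQ.eigenvectorUnitary : Matrix m m ℂ)
  else 0

/-- The matrix logarithm (base 2) via functional calculus. -/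
noncomputable def matLog {m : Type*} [Fintype m] [DecidableEq m] (Q : Matrix m m ℂ) :
    Matrix m m ℂ := mfun (Real.logb 2) Q

/-- The von Neumann entropy `S(ρ) = −Tr(ρ log ρ)` (base-2 logarithm, on the support). -/
noncomputable def vN {m : Type*} [Fintype m] [DecidableEq m] (ρ : Matrix m m ℂ) : ℝ :=
  -(Matrix.trace (ρ * matLog ρ)).re

/-- The operator norm `‖A‖_∞`. -/
noncomputable def opNorm {m : Type*} [Fintype m] [DecidableEq m] (A : Matrix m m ℂ) : ℝ :=
  ‖Matrix.toEuclideanCLM (𝕜 := ℂ) A‖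


/-- The spectral sup-entropy rate
`S̄(ω) := inf{ γ : liminf_n Tr[{A_n(γ) ≥ 0}·A_n(γ)] = 1 }` with
`A_n(γ) := ω_n − 2^{−nγ}·1_n`. -/
noncomputable def Sbar (d : ℕ) (ω : ∀ n, MatN d n) : ℝ :=
  sInf {γ : ℝ | Filter.liminf (fun n : ℕ =>
    (Matrix.trace (specProj (fun t => 0 ≤ t)
        (ω n - ((((2 : ℝ) ^ (-((n : ℝ) * γ)) : ℝ) : ℂ)) • 1) *
      (ω n - ((((2 : ℝ) ^ (-((n : ℝ) * γ)) : ℝ) : ℂ)) • 1))).re) atTop = 1}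

end

namespace SP

variable {m : Type*} [Fintype m] [DecidableEq m]

lemma herm_sub_smul {ρ : Matrix m m ℂ} (hρ : ρ.IsHermitian) (ε : ℝ) :
    (ρ - (ε : ℂ) • (1 : Matrix m m ℂ)).IsHermitian := by
  refine hρ.sub ?_
  unfold Matrix.IsHermitian
  rw [conjTranspose_smul]
  simp [Complex.conj_ofReal]

lemma trace_conj_left {U Q : Matrix m m ℂ} (h : U * star U = 1) :
    trace (star U * Q * U) = trace Q := by
  rw [trace_mul_cycle, h, one_mul]

lemma trace_conj_right {U Q : Matrix m m ℂ} (h : star U * U = 1) :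
    trace (U * Q * star U) = trace Q := by
  rw [trace_mul_cycle, h, one_mul]

lemma spec_thm {A : Matrix m m ℂ} (hA : A.IsHermitian) :
    A = (hA.eigenvectorUnitary : Matrix m m ℂ) *
      diagonal (fun i => (hA.eigenvalues i : ℂ)) *
      star (hA.eigenvectorUnitary : Matrix m m ℂ) := by
  convert hA.spectral_theorem using 3
  rfl

lemma psd_diag_re_nonneg {M : Matrix m m ℂ} (hM : M.PosSemidef) (i : m) :
    0 ≤ (M i i).re := by
  have h : (0 : ℂ) ≤ M i i := by
    exact hM.diag_nonneg
  exact (Complex.le_def.mp h).1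

lemma psd_of_proj {Q : Matrix m m ℂ} (h1 : Qᴴ = Q) (h2 : Q * Q = Q) : Q.PosSemidef := by
  have h := posSemidef_conjTranspose_mul_self Q
  rwa [h1, h2] at h

lemma exists_coeffs {A Q : Matrix m m ℂ} (hA : A.IsHermitian) (hQh : Qᴴ = Q)
    (hQi : Q * Q = Q) :
    ∃ c : m → ℝ, (∀ i, 0 ≤ c i) ∧ (∀ i, c i ≤ 1) ∧
      (trace (Q * A)).re = ∑ i, c i * hA.eigenvalues i ∧
      (trace Q).re = ∑ i, c i := by
  set U : Matrix m m ℂ := (hA.eigenvectorUnitary : Matrix m m ℂ) with hU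
  have hU1 : star U * U = 1 := Matrix.mem_unitaryGroup_iff'.mp hA.eigenvectorUnitary.2
  have hU2 : U * star U = 1 := Matrix.mem_unitaryGroup_iff.mp hA.eigenvectorUnitary.2
  set M : Matrix m m ℂ := star U * Q * U with hM
  have hMpsd : M.PosSemidef := by
    have := (psd_of_proj hQh hQi).conjTranspose_mul_mul_same U
    rwa [← star_eq_conjTranspose] at this
  have hQ1h : (1 - Q)ᴴ = 1 - Q := by
    rw [conjTranspose_sub, conjTranspose_one, hQh]
  have hQ1i : (1 - Q) * (1 - Q) = 1 - Q := by
    rw [sub_mul, one_mul, mul_sub, mul_one, hQi]; abel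
  have hM1psd : (star U * (1 - Q) * U).PosSemidef := by
    have := (psd_of_proj hQ1h hQ1i).conjTranspose_mul_mul_same U
    rwa [← star_eq_conjTranspose] at this
  have hM1 : star U * (1 - Q) * U = 1 - M := by
    rw [mul_sub, mul_one, sub_mul, hU1, hM]
  refine ⟨fun i => (M i i).re, fun i => psd_diag_re_nonneg hMpsd i, ?_, ?_, ?_⟩
  · intro i
    have h := psd_diag_re_nonneg (hM1 ▸ hM1psd) i
    have : ((1 - M) i i).re = 1 - (M i i).re := by
      simp [Matrix.sub_apply, Matrix.one_apply_eq]
    rw [this] at h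
    linarith
  · have key : trace (Q * A) = ∑ i, M i i * (hA.eigenvalues i : ℂ) := by
      conv_lhs => rw [spec_thm hA]
      rw [← hU]
      rw [show Q * (U * diagonal (fun i => (hA.eigenvalues i : ℂ)) * star U)
          = (Q * U * diagonal (fun i => (hA.eigenvalues i : ℂ))) * star U by
        simp only [mul_assoc]]
      rw [trace_mul_comm]
      rw [show star U * (Q * U * diagonal (fun i => (hA.eigenvalues i : ℂ)))
          = M * diagonal (fun i => (hA.eigenvalues i : ℂ)) by
        rw [hM]; simp only [mul_assoc]]
      simp [Matrix.trace, Matrix.mul_diagonal, Matrix.diag]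
    rw [key, Complex.re_sum]
    exact Finset.sum_congr rfl fun i _ => by simp [Complex.mul_re]
  · have : trace Q = trace M := (trace_conj_left hU2).symm
    rw [this, Matrix.trace, Complex.re_sum]
    simp [Matrix.diag]

lemma specProj_herm {A : Matrix m m ℂ} (hA : A.IsHermitian) (S : ℝ → Prop) :
    (specProj S A).IsHermitian := by
  classical
  unfold Matrix.IsHermitian
  rw [specProj, dif_pos hA]
  have hd : (Matrix.diagonal fun i => if S (hA.eigenvalues i) then (1:ℂ) else 0)ᴴ
      = Matrix.diagonal fun i => if S (hA.eigenvalues i) then (1:ℂ) else 0 := by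
    rw [diagonal_conjTranspose]
    have : (star fun i => if S (hA.eigenvalues i) then (1:ℂ) else 0)
        = fun i => if S (hA.eigenvalues i) then (1:ℂ) else 0 := by
      funext i
      simp only [Pi.star_apply]
      split_ifs <;> simp
    rw [this]
  rw [conjTranspose_mul, conjTranspose_mul, hd, star_eq_conjTranspose,
    conjTranspose_conjTranspose, mul_assoc]

lemma specProj_idem {A : Matrix m m ℂ} (hA : A.IsHermitian) (S : ℝ → Prop) :
    specProj S A * specProj S A = specProj S A := by
  classical
  set U : Matrix m m ℂ := (hA.eigenvectorUnitary : Matrix m m ℂ) with hU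
  have hU1 : star U * U = 1 := Matrix.mem_unitaryGroup_iff'.mp hA.eigenvectorUnitary.2
  rw [specProj, dif_pos hA, ← hU]
  set D : Matrix m m ℂ := Matrix.diagonal fun i => if S (hA.eigenvalues i) then (1:ℂ) else 0
    with hD
  have hDD : D * D = D := by
    rw [hD, diagonal_mul_diagonal]
    have : (fun i => (if S (hA.eigenvalues i) then (1:ℂ) else 0) *
        if S (hA.eigenvalues i) then (1:ℂ) else 0)
        = fun i => if S (hA.eigenvalues i) then (1:ℂ) else 0 := by
      funext i
      split_ifs <;> simp
    rw [this]
  calc U * D * star U * (U * D * star U) = U * (D * ((star U * U) * D)) * star U := by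
        simp only [mul_assoc]
    _ = U * D * star U := by rw [hU1, one_mul, hDD]

lemma trace_specProj_mul {A : Matrix m m ℂ} (hA : A.IsHermitian) :
    (trace (specProj (fun t => 0 ≤ t) A * A)).re = ∑ i, max (hA.eigenvalues i) 0 := by
  classical
  set U : Matrix m m ℂ := (hA.eigenvectorUnitary : Matrix m m ℂ) with hU
  have hU1 : star U * U = 1 := Matrix.mem_unitaryGroup_iff'.mp hA.eigenvectorUnitary.2
  set D : Matrix m m ℂ := Matrix.diagonal fun i => if 0 ≤ hA.eigenvalues i then (1:ℂ) else 0
    with hD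
  have hAeq : A = U * diagonal (fun i => (hA.eigenvalues i : ℂ)) * star U := by
    rw [hU]; exact spec_thm hA
  set P : Matrix m m ℂ := specProj (fun t => 0 ≤ t) A with hP
  have key : trace (P * A)
      = ∑ i, (if 0 ≤ hA.eigenvalues i then (hA.eigenvalues i : ℂ) else 0) := by
    conv_lhs => rw [hAeq]
    rw [hP, specProj, dif_pos hA, ← hU, ← hD]
    rw [show U * D * star U * (U * diagonal (fun i => (hA.eigenvalues i : ℂ)) * star U)
        = U * (D * ((star U * U) * diagonal (fun i => (hA.eigenvalues i : ℂ)))) * star U by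
      simp only [mul_assoc]]
    rw [hU1, one_mul, trace_conj_right hU1, hD, diagonal_mul_diagonal, trace_diagonal]
    refine Finset.sum_congr rfl fun i _ => ?_
    split_ifs <;> simp
  rw [key, Complex.re_sum]
  refine Finset.sum_congr rfl fun i _ => ?_
  rcases le_total 0 (hA.eigenvalues i) with h | h
  · rw [if_pos h, max_eq_left h, Complex.ofReal_re]
  · rcases eq_or_lt_of_le h with h' | h'
    · simp [← h']
    · rw [if_neg (not_le.mpr h'), max_eq_right h]
      simp

lemma sum_eigen {A : Matrix m m ℂ} (hA : A.IsHermitian) :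
    ∑ i, hA.eigenvalues i = (trace A).re := by
  have key : trace A = ∑ i, (hA.eigenvalues i : ℂ) := by
    conv_lhs => rw [spec_thm hA]
    rw [trace_conj_right (Matrix.mem_unitaryGroup_iff'.mp hA.eigenvectorUnitary.2),
      trace_diagonal]
  rw [key, Complex.re_sum]
  simp

lemma trace_expand (Q ρ : Matrix m m ℂ) (ε : ℝ) :
    (trace (Q * (ρ - (ε : ℂ) • 1))).re = (trace (Q * ρ)).re - ε * (trace Q).re := by
  rw [mul_sub, trace_sub, mul_smul_comm, mul_one, trace_smul]
  simp [Complex.mul_re]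

lemma trace_mul_real {Q B : Matrix m m ℂ} (hQ : Qᴴ = Q) (hB : Bᴴ = B) :
    trace (Q * B) = (((trace (Q * B)).re : ℝ) : ℂ) := by
  have h : (starRingEnd ℂ) (trace (Q * B)) = trace (Q * B) := by
    calc (starRingEnd ℂ) (trace (Q * B)) = trace ((Q * B)ᴴ) := (trace_conjTranspose _).symm
      _ = trace (Bᴴ * Qᴴ) := by rw [conjTranspose_mul]
      _ = trace (Q * B) := by rw [hQ, hB, trace_mul_comm]
  exact (Complex.conj_eq_iff_re.mp h).symm



lemma density_bounds {ρ Q : Matrix m m ℂ} (hρ : IsDensity ρ) (hQh : Qᴴ = Q)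
    (hQi : Q * Q = Q) :
    0 ≤ (trace (Q * ρ)).re ∧ (trace (Q * ρ)).re ≤ 1 ∧
      (trace (Q * ρ)).re ≤ (trace Q).re ∧ 0 ≤ (trace Q).re ∧
      (trace Q).re ≤ (Fintype.card m : ℝ) := by
  obtain ⟨c, hc0, hc1, htr, htrQ⟩ := exists_coeffs hρ.1.1 hQh hQi
  have hμ0 : ∀ i, 0 ≤ hρ.1.1.eigenvalues i := hρ.1.eigenvalues_nonneg
  have hsum : ∑ i, hρ.1.1.eigenvalues i = 1 := by
    rw [sum_eigen hρ.1.1, hρ.2, Complex.one_re]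
  refine ⟨?_, ?_, ?_, ?_, ?_⟩
  · rw [htr]
    exact Finset.sum_nonneg fun i _ => mul_nonneg (hc0 i) (hμ0 i)
  · rw [htr, ← hsum]
    exact Finset.sum_le_sum fun i _ => mul_le_of_le_one_left (hμ0 i) (hc1 i)
  · rw [htr, htrQ]
    refine Finset.sum_le_sum fun i _ => ?_
    have hμ1 : hρ.1.1.eigenvalues i ≤ 1 := by
      rw [← hsum]
      exact Finset.single_le_sum (fun j _ => hμ0 j) (Finset.mem_univ i)
    exact mul_le_of_le_one_right (hc0 i) hμ1
  · rw [htrQ]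
    exact Finset.sum_nonneg fun i _ => hc0 i
  · rw [htrQ]
    calc ∑ i, c i ≤ ∑ _i : m, (1 : ℝ) := Finset.sum_le_sum fun i _ => hc1 i
      _ = (Fintype.card m : ℝ) := by simp

lemma max_bound {A Q : Matrix m m ℂ} (hA : A.IsHermitian) (hQh : Qᴴ = Q) (hQi : Q * Q = Q) :
    (trace (Q * A)).re ≤ (trace (specProj (fun t => 0 ≤ t) A * A)).re := by
  obtain ⟨c, hc0, hc1, htr, -⟩ := exists_coeffs hA hQh hQi
  rw [htr, trace_specProj_mul hA]
  refine Finset.sum_le_sum fun i _ => ?_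
  rcases le_total 0 (hA.eigenvalues i) with h | h
  · calc c i * hA.eigenvalues i ≤ 1 * hA.eigenvalues i :=
        mul_le_mul_of_nonneg_right (hc1 i) h
      _ ≤ max (hA.eigenvalues i) 0 := by rw [one_mul]; exact le_max_left _ _
  · calc c i * hA.eigenvalues i ≤ 0 := mul_nonpos_of_nonneg_of_nonpos (hc0 i) h
      _ ≤ max (hA.eigenvalues i) 0 := le_max_right _ _

lemma specProj_mul_nonneg {A : Matrix m m ℂ} (hA : A.IsHermitian) :
    0 ≤ (trace (specProj (fun t => 0 ≤ t) A * A)).re := by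
  rw [trace_specProj_mul hA]
  exact Finset.sum_nonneg fun i _ => le_max_right _ _

lemma trace_real {B : Matrix m m ℂ} (hB : Bᴴ = B) :
    trace B = (((trace B).re : ℝ) : ℂ) := by
  have h := trace_mul_real (Q := (1 : Matrix m m ℂ)) (B := B) (by simp) hB
  simpa using h

lemma master {ρ A P : Matrix m m ℂ} (hρ : IsDensity ρ) {ε : ℝ} (hε : 0 < ε)
    (hAe : A = ρ - (ε : ℂ) • 1) (hPe : P = specProj (fun t => 0 ≤ t) A) :
    Pᴴ = P ∧ P * P = P ∧
    0 ≤ (trace (P * A)).re ∧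
    (trace (P * A)).re = (trace (P * ρ)).re - ε * (trace P).re ∧
    0 ≤ (trace P).re ∧ (trace P).re ≤ (Fintype.card m : ℝ) ∧
    0 ≤ (trace (P * ρ)).re ∧ (trace (P * ρ)).re ≤ 1 ∧
    (trace (P * ρ)).re ≤ (trace P).re ∧
    (∀ Q : Matrix m m ℂ, Qᴴ = Q → Q * Q = Q →
      (trace (Q * ρ)).re - ε * (trace Q).re ≤ (trace (P * A)).re) ∧
    trace (P * ρ) = (((trace (P * ρ)).re : ℝ) : ℂ) ∧
    trace P = (((trace P).re : ℝ) : ℂ) := by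
  subst hAe; subst hPe
  have hAH : (ρ - (ε : ℂ) • (1 : Matrix m m ℂ)).IsHermitian := herm_sub_smul hρ.1.1 ε
  have hPh := specProj_herm hAH (fun t => 0 ≤ t)
  have hPi := specProj_idem hAH (fun t => 0 ≤ t)
  obtain ⟨hg0, hg1, hgt, ht0, htc⟩ := density_bounds hρ hPh hPi
  refine ⟨hPh, hPi, specProj_mul_nonneg hAH, trace_expand _ _ _, ht0, htc, hg0, hg1, hgt,
    fun Q hQh hQi => ?_, trace_mul_real hPh hρ.1.1, ?_⟩
  · rw [← trace_expand]
    exact max_bound hAH hQh hQi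
  · have h := trace_conjTranspose (specProj (fun t => 0 ≤ t) (ρ - (ε : ℂ) • 1))
    rw [hPh] at h
    have h2 : (starRingEnd ℂ) (trace (specProj (fun t => 0 ≤ t) (ρ - (ε : ℂ) • 1)))
        = trace (specProj (fun t => 0 ≤ t) (ρ - (ε : ℂ) • 1)) := h.symm
    exact (Complex.conj_eq_iff_re.mp h2).symm

end SP

namespace SP

noncomputable def auxP {d : ℕ} (ω : ∀ n, MatN d n) (γ : ℝ) (n : ℕ) : MatN d n :=
  specProj (fun t => 0 ≤ t) (ω n - ((((2 : ℝ) ^ (-((n : ℝ) * γ)) : ℝ) : ℂ)) • 1)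

noncomputable def auxF {d : ℕ} (ω : ∀ n, MatN d n) (γ : ℝ) (n : ℕ) : ℝ :=
  (Matrix.trace (auxP ω γ n * (ω n - ((((2 : ℝ) ^ (-((n : ℝ) * γ)) : ℝ) : ℂ)) • 1))).re

lemma Sbar_eq {d : ℕ} (ω : ∀ n, MatN d n) :
    Sbar d ω = sInf {γ : ℝ | Filter.liminf (fun n : ℕ => auxF ω γ n) atTop = 1} := rfl

end SP

theorem stmt_16 {d : ℕ} (ω : ∀ n, MatN d n) (hdens : ∀ n, IsDensity (ω n)) :
    Sbar d ω = sInf {R : ℝ | ∃ P : ∀ n, MatN d n,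
      (∀ n, (P n).IsHermitian ∧ P n * P n = P n) ∧
      Tendsto (fun n => Matrix.trace (P n * ω n)) atTop (nhds 1) ∧
      Filter.limsup (fun n : ℕ => Real.logb 2 (Matrix.trace (P n)).re / n) atTop ≤ R} := by
  classical
  by_cases hd0 : d = 0
  · exfalso
    subst hd0
    haveI hE : IsEmpty (Fin 1 → Fin 0) := ⟨fun f => (f 0).elim0⟩
    have h0 : Matrix.trace (ω 1) = 0 := by simp [Matrix.trace]
    have h1 := (hdens 1).2
    rw [h0] at h1
    exact zero_ne_one h1
  have hdpos : (0:ℝ) < (d:ℝ) := by exact_mod_cast Nat.pos_of_ne_zero hd0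
  rw [SP.Sbar_eq]
  set S : Set ℝ := {γ : ℝ | Filter.liminf (fun n : ℕ => SP.auxF ω γ n) atTop = 1} with hSdef
  set T : Set ℝ := {R : ℝ | ∃ P : ∀ n, MatN d n,
      (∀ n, (P n).IsHermitian ∧ P n * P n = P n) ∧
      Tendsto (fun n => Matrix.trace (P n * ω n)) atTop (nhds 1) ∧
      Filter.limsup (fun n : ℕ => Real.logb 2 (Matrix.trace (P n)).re / n) atTop ≤ R} with hTdef
  have hεpos : ∀ (n : ℕ) (γ : ℝ), (0:ℝ) < (2 : ℝ) ^ (-((n : ℝ) * γ)) :=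
    fun n γ => Real.rpow_pos_of_pos two_pos _
  have hcard : ∀ n : ℕ, (Fintype.card (Fin n → Fin d) : ℝ) = (d:ℝ)^n := by
    intro n
    rw [Fintype.card_fun, Fintype.card_fin, Fintype.card_fin]
    push_cast
    ring
  have master : ∀ (γ : ℝ) (n : ℕ),
      (SP.auxP ω γ n)ᴴ = SP.auxP ω γ n ∧
      SP.auxP ω γ n * SP.auxP ω γ n = SP.auxP ω γ n ∧
      0 ≤ SP.auxF ω γ n ∧
      SP.auxF ω γ n = (Matrix.trace (SP.auxP ω γ n * ω n)).re
        - (2:ℝ) ^ (-((n:ℝ) * γ)) * (Matrix.trace (SP.auxP ω γ n)).re ∧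
      0 ≤ (Matrix.trace (SP.auxP ω γ n)).re ∧
      (Matrix.trace (SP.auxP ω γ n)).re ≤ (d:ℝ) ^ n ∧
      0 ≤ (Matrix.trace (SP.auxP ω γ n * ω n)).re ∧
      (Matrix.trace (SP.auxP ω γ n * ω n)).re ≤ 1 ∧
      (Matrix.trace (SP.auxP ω γ n * ω n)).re ≤ (Matrix.trace (SP.auxP ω γ n)).re ∧
      (∀ Q : MatN d n, Qᴴ = Q → Q * Q = Q →
        (Matrix.trace (Q * ω n)).re - (2:ℝ) ^ (-((n:ℝ) * γ)) * (Matrix.trace Q).re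
          ≤ SP.auxF ω γ n) ∧
      Matrix.trace (SP.auxP ω γ n * ω n)
        = (((Matrix.trace (SP.auxP ω γ n * ω n)).re : ℝ) : ℂ) ∧
      Matrix.trace (SP.auxP ω γ n) = (((Matrix.trace (SP.auxP ω γ n)).re : ℝ) : ℂ) := by
    intro γ n
    have h := SP.master (ρ := ω n)
      (A := ω n - ((((2:ℝ)^(-((n:ℝ)*γ)) : ℝ) : ℂ)) • 1)
      (P := SP.auxP ω γ n) (hdens n) (hεpos n γ) rfl rfl
    rw [hcard n] at h
    simpa only [SP.auxF] using h
  have hf_le_one : ∀ (γ : ℝ) (n : ℕ), SP.auxF ω γ n ≤ 1 := by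
    intro γ n
    obtain ⟨-, -, -, hexp, ht0, -, -, hg1, -, -, -, -⟩ := master γ n
    have := mul_nonneg (hεpos n γ).le ht0
    linarith
  have hSnonneg : ∀ γ ∈ S, (0:ℝ) ≤ γ := by
    intro γ hγ
    by_contra hneg
    push_neg at hneg
    have hle : ∀ n : ℕ, SP.auxF ω γ n ≤ 0 := by
      intro n
      obtain ⟨-, -, -, hexp, ht0, -, -, -, hgt, -, -, -⟩ := master γ n
      have hε1 : (1:ℝ) ≤ (2:ℝ) ^ (-((n:ℝ)*γ)) := by
        rw [show (1:ℝ) = (2:ℝ) ^ (0:ℝ) from (Real.rpow_zero 2).symm]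
        apply (Real.rpow_le_rpow_left_iff one_lt_two).mpr
        have h1 : 0 ≤ (n:ℝ) * (-γ) := mul_nonneg (Nat.cast_nonneg n) (by linarith)
        nlinarith
      have h2 : (Matrix.trace (SP.auxP ω γ n)).re
          ≤ (2:ℝ) ^ (-((n:ℝ)*γ)) * (Matrix.trace (SP.auxP ω γ n)).re :=
        le_mul_of_one_le_left ht0 hε1
      linarith
    have h1 : Filter.liminf (fun n : ℕ => SP.auxF ω γ n) atTop ≤ 0 := by
      apply Filter.liminf_le_of_le
      · exact Filter.isBoundedUnder_of ⟨0, fun n => (master γ n).2.2.1⟩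
      · intro b hb
        obtain ⟨n, hn⟩ := hb.exists
        exact hn.trans (hle n)
    have hγ' : Filter.liminf (fun n : ℕ => SP.auxF ω γ n) atTop = 1 := hγ
    rw [hγ'] at h1
    norm_num at h1
  have hubound : ∀ (P : ∀ n, MatN d n), (∀ n, (P n).IsHermitian ∧ P n * P n = P n) →
      ∀ n : ℕ, Real.logb 2 (Matrix.trace (P n)).re / n ≤ max (Real.logb 2 d) 0 := by
    intro P hproj n
    obtain ⟨h0g, hg1, hgt, ht0, htc⟩ := SP.density_bounds (hdens n) (hproj n).1 (hproj n).2
    rw [hcard n] at htc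
    rcases Nat.eq_zero_or_pos n with hn | hn
    · subst hn
      simp only [Nat.cast_zero, div_zero]
      exact le_max_right _ _
    · have hnpos : (0:ℝ) < n := by exact_mod_cast hn
      rcases eq_or_lt_of_le ht0 with ht | ht
      · rw [← ht, Real.logb_zero, zero_div]
        exact le_max_right _ _
      · have hlog : Real.logb 2 (Matrix.trace (P n)).re ≤ (n:ℝ) * Real.logb 2 d := by
          have h1 : Real.logb 2 (Matrix.trace (P n)).re ≤ Real.logb 2 ((d:ℝ)^n) :=
            Real.logb_le_logb_of_le one_lt_two ht htc
          rwa [Real.logb_pow] at h1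
        have h2 : Real.logb 2 (Matrix.trace (P n)).re / n ≤ Real.logb 2 d := by
          rw [div_le_iff₀ hnpos, mul_comm]
          exact hlog
        exact h2.trans (le_max_left _ _)
  have htno : ∀ R ∈ T, (0:ℝ) ≤ R := by
    intro R hR
    obtain ⟨P, hproj, htend, hlsup⟩ := hR
    have htendre : Tendsto (fun n : ℕ => (Matrix.trace (P n * ω n)).re) atTop (nhds 1) := by
      have h := (Complex.continuous_re.tendsto (1:ℂ)).comp htend
      simpa [Function.comp_def] using h
    have hev : ∀ᶠ n : ℕ in atTop, (1:ℝ)/2 ≤ (Matrix.trace (P n * ω n)).re :=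
      htendre.eventually (eventually_ge_nhds (by norm_num))
    have hevu : ∀ᶠ n : ℕ in atTop,
        (-1:ℝ)/(n:ℝ) ≤ Real.logb 2 (Matrix.trace (P n)).re / n := by
      filter_upwards [hev, Filter.eventually_ge_atTop 1] with n h1 h2
      have hnpos : (0:ℝ) < n := by exact_mod_cast h2
      obtain ⟨h0g, hg1, hgt, ht0, htc⟩ := SP.density_bounds (hdens n) (hproj n).1 (hproj n).2
      have ht : (1:ℝ)/2 ≤ (Matrix.trace (P n)).re := le_trans h1 hgt
      have hlb : (-1:ℝ) ≤ Real.logb 2 (Matrix.trace (P n)).re := by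
        have h2' : Real.logb 2 ((1:ℝ)/2) ≤ Real.logb 2 (Matrix.trace (P n)).re :=
          Real.logb_le_logb_of_le one_lt_two (by norm_num) ht
        have h3 : Real.logb 2 ((1:ℝ)/2) = -1 := by
          rw [show (1:ℝ)/2 = (2:ℝ)^(-1:ℝ) by rw [Real.rpow_neg_one]; norm_num]
          exact Real.logb_rpow (by norm_num) (by norm_num)
        linarith
      exact (div_le_div_iff_of_pos_right hnpos).mpr hlb
    have hcb : Filter.IsCoboundedUnder (· ≤ ·) atTop (fun n : ℕ => (-1:ℝ)/(n:ℝ)) := by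
      apply Filter.isCoboundedUnder_le_of_le atTop (x := (-1:ℝ))
      intro i
      rcases Nat.eq_zero_or_pos i with h | h
      · subst h; norm_num
      · have hi : (1:ℝ) ≤ i := by exact_mod_cast h
        have hipos : (0:ℝ) < i := by linarith
        have h1 : (1:ℝ)/(i:ℝ) ≤ 1 := by rw [div_le_one hipos]; exact hi
        have h2 : (-1:ℝ)/(i:ℝ) = -((1:ℝ)/(i:ℝ)) := by ring
        linarith
    have hbd : Filter.IsBoundedUnder (· ≤ ·) atTop
        (fun n : ℕ => Real.logb 2 (Matrix.trace (P n)).re / n) :=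
      Filter.isBoundedUnder_of ⟨max (Real.logb 2 d) 0, hubound P hproj⟩
    have h0 : Filter.limsup (fun n : ℕ => (-1:ℝ)/(n:ℝ)) atTop = 0 :=
      Filter.Tendsto.limsup_eq (tendsto_const_div_atTop_nhds_zero_nat (-1))
    calc (0:ℝ) = Filter.limsup (fun n : ℕ => (-1:ℝ)/(n:ℝ)) atTop := h0.symm
      _ ≤ Filter.limsup (fun n : ℕ => Real.logb 2 (Matrix.trace (P n)).re / n) atTop :=
          Filter.limsup_le_limsup hevu hcb hbd
      _ ≤ R := hlsup
  have hST : S ⊆ T := by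
    intro γ hγ
    have hγlim : Filter.liminf (fun n : ℕ => SP.auxF ω γ n) atTop = 1 := hγ
    have hγ0 : (0:ℝ) ≤ γ := hSnonneg γ hγ
    have hbdd_above : Filter.IsBoundedUnder (· ≤ ·) atTop (fun n : ℕ => SP.auxF ω γ n) :=
      Filter.isBoundedUnder_of ⟨1, fun n => hf_le_one γ n⟩
    have hbdd_below : Filter.IsBoundedUnder (· ≥ ·) atTop (fun n : ℕ => SP.auxF ω γ n) :=
      Filter.isBoundedUnder_of ⟨0, fun n => (master γ n).2.2.1⟩
    have hlimsup : Filter.limsup (fun n : ℕ => SP.auxF ω γ n) atTop = 1 := by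
      refine le_antisymm ?_ ?_
      · exact Filter.limsup_le_of_le hbdd_below.isCoboundedUnder_le
          (Filter.Eventually.of_forall (hf_le_one γ))
      · rw [← hγlim]
        exact Filter.liminf_le_limsup hbdd_above hbdd_below
    have hftend : Tendsto (fun n : ℕ => SP.auxF ω γ n) atTop (nhds 1) :=
      tendsto_of_liminf_eq_limsup hγlim hlimsup hbdd_above hbdd_below
    have hfg : ∀ n, SP.auxF ω γ n ≤ (Matrix.trace (SP.auxP ω γ n * ω n)).re := by
      intro n
      obtain ⟨-, -, -, hexp, ht0, -, -, -, -, -, -, -⟩ := master γ n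
      have := mul_nonneg (hεpos n γ).le ht0
      linarith
    have hgtend : Tendsto (fun n : ℕ => (Matrix.trace (SP.auxP ω γ n * ω n)).re)
        atTop (nhds 1) := by
      refine tendsto_of_tendsto_of_tendsto_of_le_of_le hftend tendsto_const_nhds hfg ?_
      exact fun n => (master γ n).2.2.2.2.2.2.2.1
    refine ⟨SP.auxP ω γ, fun n => ⟨(master γ n).1, (master γ n).2.1⟩, ?_, ?_⟩
    · have h1 : Tendsto (fun n : ℕ => (((Matrix.trace (SP.auxP ω γ n * ω n)).re : ℝ) : ℂ))
          atTop (nhds ((1:ℝ):ℂ)) := (Complex.continuous_ofReal.tendsto 1).comp hgtend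
      rw [Complex.ofReal_one] at h1
      refine h1.congr fun n => ?_
      exact ((master γ n).2.2.2.2.2.2.2.2.2.2.1).symm
    · have hkey : ∀ n : ℕ, Real.logb 2 (Matrix.trace (SP.auxP ω γ n)).re / n ≤ γ := by
        intro n
        obtain ⟨-, -, hf0, hexp, ht0, -, -, hg1, -, -, -, -⟩ := master γ n
        rcases Nat.eq_zero_or_pos n with hn | hn
        · subst hn
          simpa using hγ0
        · have hnpos : (0:ℝ) < n := by exact_mod_cast hn
          rcases eq_or_lt_of_le ht0 with ht | ht
          · rw [← ht, Real.logb_zero, zero_div]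
            exact hγ0
          · have hεt : (2:ℝ)^(-((n:ℝ)*γ)) * (Matrix.trace (SP.auxP ω γ n)).re ≤ 1 := by
              linarith
            have htle : (Matrix.trace (SP.auxP ω γ n)).re ≤ (2:ℝ)^((n:ℝ)*γ) := by
              have h2 : (2:ℝ)^(-((n:ℝ)*γ)) = ((2:ℝ)^((n:ℝ)*γ))⁻¹ := by
                rw [← Real.rpow_neg (by norm_num : (0:ℝ) ≤ 2)]
              rw [h2] at hεt
              have hp : (0:ℝ) < (2:ℝ)^((n:ℝ)*γ) := Real.rpow_pos_of_pos two_pos _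
              calc (Matrix.trace (SP.auxP ω γ n)).re
                  = (2:ℝ)^((n:ℝ)*γ)
                    * (((2:ℝ)^((n:ℝ)*γ))⁻¹ * (Matrix.trace (SP.auxP ω γ n)).re) := by
                    field_simp
                _ ≤ (2:ℝ)^((n:ℝ)*γ) * 1 := mul_le_mul_of_nonneg_left hεt hp.le
                _ = (2:ℝ)^((n:ℝ)*γ) := mul_one _
            have hlog : Real.logb 2 (Matrix.trace (SP.auxP ω γ n)).re ≤ (n:ℝ)*γ := by
              rw [Real.logb_le_iff_le_rpow one_lt_two ht]
              exact htle
            rw [div_le_iff₀ hnpos, mul_comm]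
            exact hlog
      have hevg : ∀ᶠ n : ℕ in atTop,
          (1:ℝ)/2 ≤ (Matrix.trace (SP.auxP ω γ n * ω n)).re :=
        hgtend.eventually (eventually_ge_nhds (by norm_num))
      have hevlb : ∀ᶠ n : ℕ in atTop,
          (-1:ℝ) ≤ Real.logb 2 (Matrix.trace (SP.auxP ω γ n)).re / n := by
        filter_upwards [hevg, Filter.eventually_ge_atTop 1] with n h1 h2
        have hnpos : (0:ℝ) < n := by exact_mod_cast h2
        have hn1 : (1:ℝ) ≤ n := by exact_mod_cast h2
        have hgt := (master γ n).2.2.2.2.2.2.2.2.1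
        have ht : (1:ℝ)/2 ≤ (Matrix.trace (SP.auxP ω γ n)).re := le_trans h1 hgt
        have hlb : (-1:ℝ) ≤ Real.logb 2 (Matrix.trace (SP.auxP ω γ n)).re := by
          have h2' : Real.logb 2 ((1:ℝ)/2) ≤ Real.logb 2 (Matrix.trace (SP.auxP ω γ n)).re :=
            Real.logb_le_logb_of_le one_lt_two (by norm_num) ht
          have h3 : Real.logb 2 ((1:ℝ)/2) = -1 := by
            rw [show (1:ℝ)/2 = (2:ℝ)^(-1:ℝ) by rw [Real.rpow_neg_one]; norm_num]
            exact Real.logb_rpow (by norm_num) (by norm_num)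
          linarith
        have hd1 : (-1:ℝ)/(n:ℝ) ≤ Real.logb 2 (Matrix.trace (SP.auxP ω γ n)).re / n :=
          (div_le_div_iff_of_pos_right hnpos).mpr hlb
        have hd2 : (-1:ℝ) ≤ (-1:ℝ)/(n:ℝ) := by
          have ha : (1:ℝ)/(n:ℝ) ≤ 1 := by rw [div_le_one hnpos]; exact hn1
          have hb : (-1:ℝ)/(n:ℝ) = -((1:ℝ)/(n:ℝ)) := by ring
          linarith
        linarith
      exact Filter.limsup_le_of_le
        (Filter.isCoboundedUnder_le_of_eventually_le atTop hevlb)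
        (Filter.Eventually.of_forall hkey)
  have hSne : S.Nonempty := by
    refine ⟨Real.logb 2 d + 1, ?_⟩
    have h2d : (2:ℝ)^(Real.logb 2 d) = (d:ℝ) :=
      Real.rpow_logb two_pos (by norm_num) hdpos
    have hcompute : ∀ n : ℕ,
        (2:ℝ)^(-((n:ℝ)*(Real.logb 2 d + 1))) * (d:ℝ)^n = ((1:ℝ)/2)^n := by
      intro n
      have hsplit : (2:ℝ)^(-((n:ℝ)*(Real.logb 2 d + 1)))
          = (2:ℝ)^((Real.logb 2 d) * (-(n:ℝ))) * (2:ℝ)^(-(n:ℝ)) := by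
        rw [← Real.rpow_add two_pos]
        congr 1
        ring
      rw [hsplit, Real.rpow_mul (by norm_num : (0:ℝ) ≤ 2), h2d,
        Real.rpow_neg hdpos.le, Real.rpow_neg (by norm_num : (0:ℝ) ≤ 2),
        Real.rpow_natCast, Real.rpow_natCast]
      have hdn : ((d:ℝ)^n) ≠ 0 := (pow_pos hdpos n).ne'
      have h2n : ((2:ℝ)^n) ≠ 0 := (pow_pos two_pos n).ne'
      rw [div_pow, one_pow]
      field_simp
    have hlow : ∀ n : ℕ, 1 - ((1:ℝ)/2)^n ≤ SP.auxF ω (Real.logb 2 d + 1) n := by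
      intro n
      obtain ⟨-, -, -, -, -, -, -, -, -, hmax, -, -⟩ := master (Real.logb 2 d + 1) n
      have h1 := hmax 1 (by simp) (by simp)
      rw [Matrix.one_mul] at h1
      have htr1 : (Matrix.trace (ω n)).re = 1 := by rw [(hdens n).2]; simp
      have htrI : (Matrix.trace (1 : MatN d n)).re = (d:ℝ)^n := by
        rw [Matrix.trace_one]
        rw [show ((Fintype.card (Fin n → Fin d) : ℂ)).re
            = ((Fintype.card (Fin n → Fin d) : ℝ)) from Complex.natCast_re _]
        exact hcard n
      rw [htr1, htrI] at h1
      calc 1 - ((1:ℝ)/2)^n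
          = 1 - (2:ℝ)^(-((n:ℝ)*(Real.logb 2 d + 1))) * (d:ℝ)^n := by rw [hcompute n]
        _ ≤ _ := h1
    have htlow : Tendsto (fun n : ℕ => 1 - ((1:ℝ)/2)^n) atTop (nhds 1) := by
      have h1 : Tendsto (fun n : ℕ => ((1:ℝ)/2)^n) atTop (nhds 0) :=
        tendsto_pow_atTop_nhds_zero_of_lt_one (by norm_num) (by norm_num)
      have h2 := (tendsto_const_nhds (x := (1:ℝ)) (f := atTop)).sub h1
      simpa using h2
    have hftend : Tendsto (fun n : ℕ => SP.auxF ω (Real.logb 2 d + 1) n) atTop (nhds 1) :=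
      tendsto_of_tendsto_of_tendsto_of_le_of_le htlow tendsto_const_nhds hlow
        (fun n => hf_le_one _ n)
    exact hftend.liminf_eq
  have hTne : T.Nonempty := by
    obtain ⟨γ₀, hγ₀⟩ := hSne
    exact ⟨γ₀, hST hγ₀⟩
  have hRη : ∀ R ∈ T, ∀ η : ℝ, 0 < η → (R + η) ∈ S := by
    intro R hR η hη
    have hR0 : (0:ℝ) ≤ R := htno R hR
    obtain ⟨P, hproj, htend, hlsup⟩ := hR
    have htendre : Tendsto (fun n : ℕ => (Matrix.trace (P n * ω n)).re) atTop (nhds 1) := by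
      have h := (Complex.continuous_re.tendsto (1:ℂ)).comp htend
      simpa [Function.comp_def] using h
    have hbd : Filter.IsBoundedUnder (· ≤ ·) atTop
        (fun n : ℕ => Real.logb 2 (Matrix.trace (P n)).re / n) :=
      Filter.isBoundedUnder_of ⟨max (Real.logb 2 d) 0, hubound P hproj⟩
    have hev2 : ∀ᶠ n : ℕ in atTop,
        Real.logb 2 (Matrix.trace (P n)).re / n < R + η/2 :=
      Filter.eventually_lt_of_limsup_lt (lt_of_le_of_lt hlsup (by linarith)) hbd
    have hevbound : ∀ᶠ n : ℕ in atTop,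
        (2:ℝ)^(-((n:ℝ)*(R+η))) * (Matrix.trace (P n)).re ≤ ((2:ℝ)^(-(η/2)))^n := by
      filter_upwards [hev2, Filter.eventually_ge_atTop 1] with n hun hn1
      have hnpos : (0:ℝ) < n := by exact_mod_cast hn1
      obtain ⟨h0g, hg1, hgt, ht0, htc⟩ := SP.density_bounds (hdens n) (hproj n).1 (hproj n).2
      have hstep : (Matrix.trace (P n)).re ≤ (2:ℝ)^((n:ℝ)*(R+η/2)) := by
        rcases eq_or_lt_of_le ht0 with ht | ht
        · rw [← ht]
          exact (Real.rpow_pos_of_pos two_pos _).le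
        · have hlt : Real.logb 2 (Matrix.trace (P n)).re < (n:ℝ)*(R+η/2) := by
            rw [div_lt_iff₀ hnpos] at hun
            linarith [hun]
          exact le_of_lt ((Real.logb_lt_iff_lt_rpow one_lt_two ht).mp hlt)
      calc (2:ℝ)^(-((n:ℝ)*(R+η))) * (Matrix.trace (P n)).re
          ≤ (2:ℝ)^(-((n:ℝ)*(R+η))) * (2:ℝ)^((n:ℝ)*(R+η/2)) :=
            mul_le_mul_of_nonneg_left hstep (Real.rpow_pos_of_pos two_pos _).le
        _ = ((2:ℝ)^(-(η/2)))^n := by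
            rw [← Real.rpow_add two_pos, ← Real.rpow_natCast ((2:ℝ)^(-(η/2))) n,
              ← Real.rpow_mul (by norm_num : (0:ℝ) ≤ 2)]
            congr 1
            ring
    have hz : Tendsto (fun n : ℕ => (2:ℝ)^(-((n:ℝ)*(R+η))) * (Matrix.trace (P n)).re)
        atTop (nhds 0) := by
      apply squeeze_zero'
      · filter_upwards with n
        exact mul_nonneg (hεpos n (R+η)).le
          (SP.density_bounds (hdens n) (hproj n).1 (hproj n).2).2.2.2.1
      · exact hevbound
      · exact tendsto_pow_atTop_nhds_zero_of_lt_one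
          (Real.rpow_pos_of_pos two_pos _).le
          (Real.rpow_lt_one_of_one_lt_of_neg one_lt_two (by linarith))
    have hlowtend : Tendsto (fun n : ℕ => (Matrix.trace (P n * ω n)).re
        - (2:ℝ)^(-((n:ℝ)*(R+η))) * (Matrix.trace (P n)).re) atTop (nhds 1) := by
      have h := htendre.sub hz
      simpa using h
    have hfttend : Tendsto (fun n : ℕ => SP.auxF ω (R+η) n) atTop (nhds 1) := by
      refine tendsto_of_tendsto_of_tendsto_of_le_of_le hlowtend tendsto_const_nhds
        ?_ (fun n => hf_le_one _ n)
      intro n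
      obtain ⟨-, -, -, -, -, -, -, -, -, hmax, -, -⟩ := master (R+η) n
      exact hmax (P n) (hproj n).1 (hproj n).2
    exact hfttend.liminf_eq
  refine le_antisymm ?_ ?_
  · refine le_csInf hTne fun R hR => ?_
    refine le_of_forall_pos_le_add fun η hη => ?_
    exact csInf_le ⟨0, fun x hx => hSnonneg x hx⟩ (hRη R hR η hη)
  · exact csInf_le_csInf ⟨0, fun R hR => htno R hR⟩ hSne hST
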